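/- Let G be a finite group, let V and W be finite-dimensional complex vector spaces carrying irreducible representations ρ : G → GL(V) and π : G → GL(W) (i.e. V and W are simple as modules over ℂ[G]), and let χ : G → ℂ* be a one-dimensional character such that the twisted representation g ↦ χ(g)·ρ(g) on V is isomorphic to the dual representation of π. Then for every β ∈ ℂ[G], the operator Σ_{g∈G} χ(g)·(ρ(g)∘ρ̃(β)) ⊗ π(g) on V ⊗ W is zero if and only if ρ̃(β) = 0 in End(V), where ρ̃ : ℂ[G] → End(V) is the algebra map extending ρ. -/

import Mathlib

/-- Let `G` be a finite group, `ρ`, `π` irreducible finite-dimensional complex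
representations of `G` on `V`, `W`, and `χ : G → ℂ*` a one-dimensional character such
that the twist of `ρ` by `χ` is isomorphic to the dual representation of `π`. Then for
`β ∈ ℂ[G]`, the operator `Σ_{g∈G} χ(g)·(ρ(g)∘ρ̃(β)) ⊗ π(g)` on `V ⊗ W` vanishes iff
`ρ̃(β) = 0` in `End(V)`. -/
theorem twisted_sum_tensor_eq_zero_iff (G : Type*) [Group G] [Fintype G]
    (V W : Type*) [AddCommGroup V] [Module ℂ V] [AddCommGroup W] [Module ℂ W]
    [FiniteDimensional ℂ V] [FiniteDimensional ℂ W]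
    (ρ : Representation ℂ G V) (π : Representation ℂ G W)
    (hρ : ∀ U : Submodule ℂ V, (∀ g : G, U.map (ρ g) ≤ U) → U = ⊥ ∨ U = ⊤)
    (hπ : ∀ U : Submodule ℂ W, (∀ g : G, U.map (π g) ≤ U) → U = ⊥ ∨ U = ⊤)
    (χ : G →* ℂˣ)
    (T : V ≃ₗ[ℂ] Module.Dual ℂ W)
    (hT : ∀ (g : G) (v : V), T ((χ g : ℂ) • ρ g v) = (π g⁻¹).dualMap (T v))
    (β : MonoidAlgebra ℂ G) :
    (∑ g : G, (χ g : ℂ) •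
        TensorProduct.map ((ρ g) ∘ₗ (β.coeff.sum fun h c => c • ρ h)) (π g)) = 0 ↔
      (β.coeff.sum fun h c => c • ρ h) = 0 := by
  set A : V →ₗ[ℂ] V := β.coeff.sum fun h c => c • ρ h with hA
  constructor
  · intro hS
    -- contraction map
    set e : TensorProduct ℂ V W →ₗ[ℂ] ℂ := TensorProduct.lift T.toLinearMap with he
    have key : ∀ (v : V) (w : W), (T (A v)) w = 0 := by
      intro v w
      have h1 : (∑ g : G, (χ g : ℂ) •
          TensorProduct.map ((ρ g) ∘ₗ A) (π g)) (v ⊗ₜ[ℂ] w) = 0 := by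
        rw [hS]; rfl
      have h2 : e ((∑ g : G, (χ g : ℂ) •
          TensorProduct.map ((ρ g) ∘ₗ A) (π g)) (v ⊗ₜ[ℂ] w)) = 0 := by
        rw [h1]; simp
      rw [LinearMap.sum_apply, map_sum] at h2
      have h3 : ∀ g : G, e (((χ g : ℂ) •
          TensorProduct.map ((ρ g) ∘ₗ A) (π g)) (v ⊗ₜ[ℂ] w)) = (T (A v)) w := by
        intro g
        have hTg := hT g (A v)
        have hTg' : (χ g : ℂ) • T (ρ g (A v)) = (T (A v)).comp (π g⁻¹) := by
          rw [← map_smul, hTg]; rfl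
        have hTgw := congrArg (fun f : Module.Dual ℂ W => f (π g w)) hTg'
        simp only [LinearMap.smul_apply, LinearMap.comp_apply, smul_eq_mul] at hTgw
        have hinv : (π g⁻¹) ((π g) w) = w := by
          have : (π g⁻¹ * π g) w = w := by
            rw [← map_mul, inv_mul_cancel, map_one]; rfl
          exact this
        rw [hinv] at hTgw
        simp only [LinearMap.smul_apply, map_smul, he, TensorProduct.map_tmul,
          TensorProduct.lift.tmul, LinearMap.comp_apply, smul_eq_mul,
          LinearEquiv.coe_coe]
        exact hTgw
      rw [Finset.sum_congr rfl (fun g _ => h3 g)] at h2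
      rw [Finset.sum_const] at h2
      have hcard : (Fintype.card G : ℂ) ≠ 0 := by
        exact_mod_cast Fintype.card_ne_zero
      have := h2
      rw [nsmul_eq_mul] at this
      exact (mul_eq_zero.mp this).resolve_left (by exact_mod_cast hcard)
    ext v
    have hTAv : T (A v) = 0 := by
      ext w; exact key v w
    simpa using (map_eq_zero_iff T T.injective).mp hTAv
  · intro h
    rw [h]
    refine Finset.sum_eq_zero fun g _ => ?_
    rw [LinearMap.comp_zero]
    rw [show (TensorProduct.map (0 : V →ₗ[ℂ] V) (π g)) = 0 from
      TensorProduct.map_zero_left _]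
    simp
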